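/- arXiv:2307.05453 — 2 statements merged into one kernel-verified Lean document; each statement's English description precedes it below -/
import Mathlib

section
/- Let H, K be closed subspaces of L², a ∈ 𝒢L∞ with aK = H, and φ, ψ ∈ L∞; set E = T_{ā}^{H,K} and F = T_a^{K,H}, and suppose T_φ^K = E ∘ T_ψ^H ∘ F. Suppose C_H is an antilinear unitary on H such that F⁻¹ ∘ C_H ∘ F = E ∘ C_H ∘ E⁻¹, and set C_K = F⁻¹ ∘ C_H ∘ F. Then T_ψ^H is complex selfadjoint with respect to C_H if and only if T_φ^K is complex selfadjoint with respect to the antilinear unitary C_K. -/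
open MeasureTheory

noncomputable section

/-! ## Setup: the circle, L², L∞, multiplication operators, Hardy space,
model spaces, and generalized Toeplitz operators -/

instance : Fact (0 < 2 * Real.pi) := ⟨by positivity⟩

/-- The normalized Lebesgue (Haar) measure `dθ/2π` on the circle. -/
abbrev μH : Measure (AddCircle (2 * Real.pi)) := AddCircle.haarAddCircle

/-- The Lebesgue space `L²` of the circle. -/
abbrev L2 : Type := Lp ℂ 2 μH

/-- The space `L∞` of essentially bounded functions on the circle. -/
abbrev Linf : Type := Lp ℂ ⊤ μH

/-- Pointwise (a.e.) multiplication on `L∞`. -/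
instance : Mul Linf :=
  ⟨fun f g => ((Lp.memLp g).smul (p := ⊤) (r := ⊤) (Lp.memLp f)).toLp (⇑f • ⇑g)⟩

/-- The constant function `1` as an element of `L∞`. -/
instance : One Linf := ⟨(memLp_const (1 : ℂ)).toLp (fun _ => (1 : ℂ))⟩

/-- Complex conjugation on `L∞`. -/
instance : Star Linf :=
  ⟨fun f => ((Complex.conjCLE.toContinuousLinearMap).comp_memLp' (Lp.memLp f)).toLp
    ((starRingEnd ℂ) ∘ ⇑f)⟩

/-- Multiplication of an `L²` function by an `L∞` function. -/
def mulFun (φ : Linf) (f : L2) : L2 :=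
  ((Lp.memLp f).smul (p := ⊤) (r := 2) (Lp.memLp φ)).toLp (⇑φ • ⇑f)

lemma mulFun_coe (φ : Linf) (f : L2) : mulFun φ f =ᵐ[μH] ⇑φ • ⇑f :=
  MemLp.coeFn_toLp _

lemma mulFun_norm_le (φ : Linf) (f : L2) : ‖mulFun φ f‖ ≤ ‖φ‖ * ‖f‖ := by
  rw [mulFun, Lp.norm_toLp, Lp.norm_def, Lp.norm_def, ← ENNReal.toReal_mul]
  refine ENNReal.toReal_mono ?_ ?_
  · exact ENNReal.mul_ne_top (Lp.eLpNorm_ne_top φ) (Lp.eLpNorm_ne_top f)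
  · exact eLpNorm_smul_le_eLpNorm_top_mul_eLpNorm 2 (Lp.aestronglyMeasurable f) ⇑φ

/-- The bounded multiplication operator `M_φ : L² → L²` for `φ ∈ L∞`. -/
def mulCLM (φ : Linf) : L2 →L[ℂ] L2 :=
  LinearMap.mkContinuous
    { toFun := mulFun φ
      map_add' := by
        intro f g
        apply Lp.ext
        filter_upwards [mulFun_coe φ (f + g), mulFun_coe φ f, mulFun_coe φ g,
          Lp.coeFn_add f g, Lp.coeFn_add (mulFun φ f) (mulFun φ g)] with x h1 h2 h3 h4 h5
        simp only [Pi.smul_apply', Pi.add_apply] at *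
        rw [h1, h5, h2, h3, h4]
        exact smul_add _ _ _
      map_smul' := by
        intro c f
        apply Lp.ext
        filter_upwards [mulFun_coe φ (c • f), mulFun_coe φ f,
          Lp.coeFn_smul c f, Lp.coeFn_smul c (mulFun φ f)] with x h1 h2 h3 h4
        simp only [Pi.smul_apply', Pi.smul_apply, RingHom.id_apply] at *
        rw [h1, h4, h2, h3]
        exact smul_comm _ _ _ }
    ‖φ‖ (mulFun_norm_le φ)

/-- The image `a·K = {a f : f ∈ K}` of a subspace `K ⊆ L²` under multiplication by `a ∈ L∞`. -/
def smulSub (a : Linf) (K : Submodule ℂ L2) : Submodule ℂ L2 :=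
  K.map (mulCLM a : L2 →ₗ[ℂ] L2)

/-- The Hardy space `H² = {f ∈ L² : f̂(n) = 0 for n < 0}`. -/
def Hardy : Submodule ℂ L2 where
  carrier := {f | ∀ n : ℤ, n < 0 → fourierBasis.repr f n = 0}
  add_mem' := by
    intro f g hf hg n hn
    rw [map_add, lp.coeFn_add, Pi.add_apply, hf n hn, hg n hn, add_zero]
  zero_mem' := by
    intro n hn
    rw [map_zero, lp.coeFn_zero]
    rfl
  smul_mem' := by
    intro c f hf n hn
    rw [_root_.map_smul, lp.coeFn_smul, Pi.smul_apply, hf n hn, smul_zero]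

lemma hardy_isClosed : IsClosed (Hardy : Set L2) := by
  have h : (Hardy : Set L2) =
      ⋂ n : {m : ℤ // m < 0}, {f : L2 | fourierBasis.repr f n.1 = 0} := by
    ext f
    constructor
    · intro hf
      exact Set.mem_iInter.2 fun n => hf n.1 n.2
    · intro hf n hn
      exact Set.mem_iInter.1 hf ⟨n, hn⟩
  rw [h]
  refine isClosed_iInter fun n => isClosed_eq ?_ continuous_const
  have : (fun f : L2 => fourierBasis.repr f n.1) =
      fun f : L2 => (innerSL ℂ (fourierBasis n.1)) f := by
    funext f
    exact fourierBasis.repr_apply_apply f n.1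
  rw [this]
  exact (innerSL ℂ (fourierBasis n.1)).continuous

instance : CompleteSpace Hardy := hardy_isClosed.completeSpace_coe

/-- The model space `K_θ = H² ⊖ θH² = H² ∩ (θH²)^⊥`. -/
def modelSpace (θ : Linf) : Submodule ℂ L2 :=
  Hardy ⊓ (smulSub θ Hardy)ᗮ

instance (θ : Linf) : CompleteSpace (modelSpace θ) := by
  refine IsClosed.completeSpace_coe (hs := ?_)
  have h : (modelSpace θ : Set L2) = (Hardy : Set L2) ∩ ((smulSub θ Hardy)ᗮ : Set L2) := rfl
  rw [h]
  exact hardy_isClosed.inter (smulSub θ Hardy).isClosed_orthogonal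

/-- The generalized Toeplitz operator `T_φ^{H₁,H₂} = P_{H₂} M_φ |_{H₁}`. -/
def genToeplitz (φ : Linf) (H₁ H₂ : Submodule ℂ L2) [CompleteSpace H₂] : H₁ →L[ℂ] H₂ :=
  H₂.orthogonalProjectionOnto.comp ((mulCLM φ).comp H₁.subtypeL)

/-- The orthogonal projection of `L²` onto `H`, viewed as an operator `L² → L²`. -/
def projL (H : Submodule ℂ L2) [CompleteSpace H] : L2 →L[ℂ] L2 :=
  H.subtypeL.comp H.orthogonalProjectionOnto

/-- `φ ∈ H∞`: all negative Fourier coefficients of `φ` vanish. -/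
def IsHardyInf (φ : Linf) : Prop := ∀ n : ℤ, n < 0 → fourierCoeff (⇑φ) n = 0

/-- `θ` is an inner function: `θ ∈ H∞` and `|θ| = 1` a.e. on the circle. -/
def IsInner (θ : Linf) : Prop :=
  IsHardyInf θ ∧ ∀ᵐ x ∂μH, ‖(θ : AddCircle (2 * Real.pi) → ℂ) x‖ = 1

/-- `a ∈ 𝒢H∞` with explicit inverse `b ∈ H∞`. -/
def GHinfPair (a b : Linf) : Prop := IsHardyInf a ∧ IsHardyInf b ∧ a * b = 1

/-- `a ∈ 𝒢H∞`: `a` is invertible in the algebra `H∞`. -/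
def IsGHinf (a : Linf) : Prop := ∃ b, GHinfPair a b

/-- `b ∈ 𝒢H̄∞`: `b` is the conjugate of an element of `𝒢H∞`. -/
def IsGHinfBar (b : Linf) : Prop := ∃ c, IsGHinf c ∧ b = star c

/-- `a ∈ 𝒢L∞` with explicit inverse `b`. -/
def GLinfPair (a b : Linf) : Prop := a * b = 1 ∧ b * a = 1

/-- `a ∈ 𝒢L∞`: `a` is invertible in the algebra `L∞`. -/
def IsGLinf (a : Linf) : Prop := ∃ b, GLinfPair a b

/-- The kernel of an operator between subspaces of `L²`, viewed as a subspace of `L²`. -/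
def subKer {K₁ K₂ : Submodule ℂ L2} (T : K₁ →L[ℂ] K₂) : Submodule ℂ L2 :=
  (LinearMap.ker (T : K₁ →ₗ[ℂ] K₂)).map K₁.subtype

/-- The range of an operator between subspaces of `L²`, viewed as a subspace of `L²`. -/
def subRan {K₁ K₂ : Submodule ℂ L2} (T : K₁ →L[ℂ] K₂) : Submodule ℂ L2 :=
  (LinearMap.range (T : K₁ →ₗ[ℂ] K₂)).map K₂.subtype

/-- The image of a subspace `S ⊆ K₁` under `T : K₁ → K₂`, viewed as a subspace of `L²`. -/
def opImage {K₁ K₂ : Submodule ℂ L2} (T : K₁ →L[ℂ] K₂) (S : Submodule ℂ K₁) :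
    Submodule ℂ L2 :=
  (S.map (T : K₁ →ₗ[ℂ] K₂)).map K₂.subtype

section Antilinear

variable {E : Type*} [NormedAddCommGroup E] [InnerProductSpace ℂ E]

/-- `C` is antilinear: `C(f + a g) = C f + ā C g`. -/
def IsAntilinearMap (C : E → E) : Prop :=
  ∀ (f g : E) (a : ℂ), C (f + a • g) = C f + (starRingEnd ℂ a) • C g

/-- `Cs` is the antilinear adjoint of `C`: `⟨C f, g⟩ = conj ⟨f, Cs g⟩`. -/
def IsAntilinearAdjointOf (C Cs : E → E) : Prop :=
  ∀ f g : E, (inner ℂ (C f) g : ℂ) = (starRingEnd ℂ) (inner ℂ f (Cs g) : ℂ)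

/-- `C` is an antilinear unitary: it is antilinear and its antilinear adjoint is its inverse. -/
def IsAntilinearUnitary (C : E → E) : Prop :=
  IsAntilinearMap C ∧ ∃ Cs : E → E, IsAntilinearAdjointOf C Cs ∧
    Function.LeftInverse Cs C ∧ Function.RightInverse Cs C

/-- `T` is complex selfadjoint with respect to `C` (with inverse `Cinv`): `C T C⁻¹ = T*`. -/
def IsComplexSelfadjointWith [CompleteSpace E] (T : E →L[ℂ] E) (C Cinv : E → E) : Prop :=
  ∀ f : E, C (T (Cinv f)) = ContinuousLinearMap.adjoint T f

end Antilinear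


lemma mulCLM_inner_adj (a : Linf) (x y : L2) :
    (inner ℂ (mulCLM a x) y : ℂ) = inner ℂ x (mulCLM (star a) y) := by
  rw [MeasureTheory.L2.inner_def, MeasureTheory.L2.inner_def]
  refine integral_congr_ae ?_
  have hsa : ⇑(star a) =ᵐ[μH] (starRingEnd ℂ) ∘ ⇑a := MemLp.coeFn_toLp _
  filter_upwards [mulFun_coe a x, mulFun_coe (star a) y, hsa] with t h1 h2 h3
  have hm : (mulCLM a x : L2) t = (⇑a • ⇑x) t := h1
  have hm2 : (mulCLM (star a) y : L2) t = (⇑(star a) • ⇑y) t := h2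
  simp only [RCLike.inner_apply, hm, hm2, Pi.smul_apply', smul_eq_mul, h3,
    Function.comp_apply, map_mul]
  ring

lemma adj_genToeplitz (a : Linf) (H K : Submodule ℂ L2)
    [CompleteSpace H] [CompleteSpace K] :
    ContinuousLinearMap.adjoint (genToeplitz (star a) H K) = genToeplitz a K H := by
  symm
  rw [ContinuousLinearMap.eq_adjoint_iff]
  intro x y
  show (inner ℂ (H.orthogonalProjectionOnto (mulCLM a (x : L2))) y : ℂ)
      = inner ℂ x (K.orthogonalProjectionOnto (mulCLM (star a) (y : L2)))
  rw [Submodule.inner_orthogonalProjectionOnto_eq_of_mem_right, Submodule.inner_orthogonalProjectionOnto_eq_of_mem_left]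
  exact mulCLM_inner_adj a (x : L2) (y : L2)

set_option maxHeartbeats 2000000 in
/-- Theorem 4.4: if `T_φ^K = E T_ψ^H F` with `E = T_{ā}^{H,K}`,
`F = T_a^{K,H}`, `aK = H`, and `C_H` is an antilinear unitary on `H` with
`F⁻¹ C_H F = E C_H E⁻¹`, then `T_ψ^H` is complex selfadjoint w.r.t. `C_H` iff
`T_φ^K` is complex selfadjoint w.r.t. `C_K = F⁻¹ C_H F`. -/
theorem statement16 (H K : Submodule ℂ L2) [CompleteSpace H] [CompleteSpace K]
    (a b : Linf) (hab : GLinfPair a b) (haK : smulSub a K = H) (φ ψ : Linf)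
    (Einv : K →L[ℂ] H) (Finv : H →L[ℂ] K)
    (hE1 : (genToeplitz (star a) H K).comp Einv = ContinuousLinearMap.id ℂ K)
    (hE2 : Einv.comp (genToeplitz (star a) H K) = ContinuousLinearMap.id ℂ H)
    (hF1 : (genToeplitz a K H).comp Finv = ContinuousLinearMap.id ℂ H)
    (hF2 : Finv.comp (genToeplitz a K H) = ContinuousLinearMap.id ℂ K)
    (hT : genToeplitz φ K K =
      (genToeplitz (star a) H K).comp ((genToeplitz ψ H H).comp (genToeplitz a K H)))
    (CH CHinv : H → H)
    (hClin : IsAntilinearMap CH) (hCadj : IsAntilinearAdjointOf CH CHinv)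
    (hCli : Function.LeftInverse CHinv CH) (hCri : Function.RightInverse CHinv CH)
    (hcond : ∀ f : K,
      Finv (CH (genToeplitz a K H f)) = genToeplitz (star a) H K (CH (Einv f))) :
    IsComplexSelfadjointWith (genToeplitz ψ H H) CH CHinv ↔
      IsComplexSelfadjointWith (genToeplitz φ K K)
        (fun f : K => Finv (CH (genToeplitz a K H f)))
        (fun f : K => Finv (CHinv (genToeplitz a K H f))) := by
  have hF1' : ∀ h : H, genToeplitz a K H (Finv h) = h := fun h =>
    congrFun (congrArg DFunLike.coe hF1) h
  have hE2' : ∀ h : H, Einv (genToeplitz (star a) H K h) = h := fun h =>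
    congrFun (congrArg DFunLike.coe hE2) h
  have hT' : ∀ f : K, genToeplitz φ K K f
      = genToeplitz (star a) H K (genToeplitz ψ H H (genToeplitz a K H f)) := fun f =>
    congrFun (congrArg DFunLike.coe hT) f
  -- F ∘ E' where E' = genToeplitz (star a) H K"
  have hcond' : ∀ h : H, Finv (CH (genToeplitz a K H (genToeplitz (star a) H K h)))
      = genToeplitz (star a) H K (CH h) := by
    intro h
    rw [hcond (genToeplitz (star a) H K h), hE2' h]
  have hFadj : ContinuousLinearMap.adjoint (genToeplitz a K H)
      = genToeplitz (star a) H K := by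
    rw [← adj_genToeplitz a H K, ContinuousLinearMap.adjoint_adjoint]
  have hadj : ∀ f : K, ContinuousLinearMap.adjoint (genToeplitz φ K K) f
      = genToeplitz (star a) H K
          (ContinuousLinearMap.adjoint (genToeplitz ψ H H) (genToeplitz a K H f)) := by
    intro f
    rw [hT, ContinuousLinearMap.adjoint_comp, ContinuousLinearMap.adjoint_comp,
      adj_genToeplitz, hFadj]
    simp only [ContinuousLinearMap.comp_apply]
  constructor
  · intro hpsi f
    beta_reduce
    rw [hT' (Finv (CHinv (genToeplitz a K H f))), hF1', hcond', hpsi, hadj]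
  · intro hphi h
    have key := hphi (Finv h)
    beta_reduce at key
    rw [hF1', hT' (Finv (CHinv h)), hF1', hcond', hadj, hF1'] at key
    have := congrArg Einv key
    rwa [hE2', hE2'] at this
end
end

section
/- Let θ be an inner function and φ = a₋·θ̄·a₊ with a₊ ∈ 𝒢H∞ and a₋ ∈ 𝒢H̄∞. Then: (a) ker T_φ = a₊⁻¹ K_θ; (b) (ker T_φ)^⊥ = ā₊ K_θ^⊥, where orthogonal complements are taken in L². -/
open MeasureTheory

noncomputable section

section AuxLemmas

open scoped InnerProductSpace

lemma mulCLM_apply (a : Linf) (f : L2) : mulCLM a f = mulFun a f := rfl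

lemma mulCLM_coe (a : Linf) (f : L2) :
    ⇑(mulCLM a f) =ᵐ[μH] fun x => a x * f x := by
  filter_upwards [mulFun_coe a f] with x hx
  simpa [mulCLM_apply, Pi.smul_apply', smul_eq_mul] using hx

lemma Linf_mul_coe (a b : Linf) : ⇑(a * b) =ᵐ[μH] fun x => a x * b x := by
  filter_upwards [(MemLp.coeFn_toLp _ : ⇑(a * b) =ᵐ[μH] ⇑a • ⇑b)] with x hx
  exact hx

lemma Linf_one_coe : ⇑(1 : Linf) =ᵐ[μH] fun _ => (1 : ℂ) :=
  MemLp.coeFn_toLp _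

lemma Linf_star_coe (a : Linf) : ⇑(star a) =ᵐ[μH] fun x => (starRingEnd ℂ) (a x) :=
  MemLp.coeFn_toLp _

lemma mulCLM_mul (a b : Linf) (f : L2) :
    mulCLM (a * b) f = mulCLM a (mulCLM b f) := by
  apply Lp.ext
  filter_upwards [mulCLM_coe (a * b) f, mulCLM_coe a (mulCLM b f), mulCLM_coe b f,
    Linf_mul_coe a b] with x h1 h2 h3 h4
  rw [h1, h2, h3, h4, mul_assoc]

lemma mulCLM_cancel' {a b : Linf} (h : ∀ᵐ x ∂μH, a x * b x = 1) (f : L2) :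
    mulCLM a (mulCLM b f) = f := by
  apply Lp.ext
  filter_upwards [mulCLM_coe a (mulCLM b f), mulCLM_coe b f, h] with x h1 h2 h3
  rw [h1, h2, ← mul_assoc, h3, one_mul]

lemma mulCLM_star_cancel' {a b : Linf} (h : ∀ᵐ x ∂μH, a x * b x = 1) (f : L2) :
    mulCLM (star a) (mulCLM (star b) f) = f := by
  apply Lp.ext
  filter_upwards [mulCLM_coe (star a) (mulCLM (star b) f), mulCLM_coe (star b) f,
    Linf_star_coe a, Linf_star_coe b, h] with x h1 h2 h3 h4 h5
  rw [h1, h2, h3, h4, ← mul_assoc, ← map_mul, h5, map_one, one_mul]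

lemma ae_mul_one {a b : Linf} (h : a * b = 1) : ∀ᵐ x ∂μH, a x * b x = 1 := by
  have h1 := Linf_mul_coe a b
  rw [h] at h1
  filter_upwards [h1, Linf_one_coe] with x hx hy
  rw [← hx, hy]

lemma ae_mul_one' {a b : Linf} (h : a * b = 1) : ∀ᵐ x ∂μH, b x * a x = 1 := by
  filter_upwards [ae_mul_one h] with x hx
  rw [mul_comm]; exact hx

lemma inner_mulCLM (a : Linf) (f g : L2) :
    ⟪mulCLM a f, g⟫_ℂ = ⟪f, mulCLM (star a) g⟫_ℂ := by
  rw [MeasureTheory.L2.inner_def, MeasureTheory.L2.inner_def]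
  apply integral_congr_ae
  filter_upwards [mulCLM_coe a f, mulCLM_coe (star a) g, Linf_star_coe a] with x h1 h2 h3
  rw [h1, h2, h3]
  simp only [RCLike.inner_apply, map_mul]
  ring

lemma fourierCoeff_congr_ae' {f g : AddCircle (2 * Real.pi) → ℂ} (h : f =ᵐ[μH] g) (n : ℤ) :
    fourierCoeff f n = fourierCoeff g n := by
  unfold fourierCoeff
  apply integral_congr_ae
  filter_upwards [h] with x hx
  rw [hx]

lemma fourierCoeff_star_mul_fourier (a : Linf) (n k : ℤ) :
    fourierCoeff (⇑(mulCLM (star a) (fourierBasis n : L2))) k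
      = (starRingEnd ℂ) (fourierCoeff (⇑a) (n - k)) := by
  have h1 : (fun t => fourier (-k) t • (mulCLM (star a) (fourierBasis n : L2)) t)
      =ᵐ[μH] fun t => (starRingEnd ℂ) (fourier (-(n - k)) t • a t) := by
    filter_upwards [mulCLM_coe (star a) (fourierBasis n : L2), Linf_star_coe a,
      (by rw [coe_fourierBasis] : (fourierBasis n : L2) = fourierLp 2 n) ▸
        coeFn_fourierLp (T := 2 * Real.pi) 2 n] with t h1 h2 h3
    rw [h1, h2, h3]
    have e1 : @fourier (2 * Real.pi) (n - k) t = fourier n t * fourier (-k) t := by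
      rw [sub_eq_add_neg, fourier_add]
    have e3 : (starRingEnd ℂ) (@fourier (2 * Real.pi) (-(n - k)) t)
        = fourier (n - k) t := by
      rw [← fourier_neg, neg_neg]
    rw [smul_eq_mul, smul_eq_mul, map_mul, e3, e1]
    ring
  rw [fourierCoeff, integral_congr_ae h1, integral_conj]
  rfl

lemma hardy_mem_iff {f : L2} : f ∈ Hardy ↔ ∀ n : ℤ, n < 0 → fourierCoeff (⇑f) n = 0 := by
  constructor
  · intro hf n hn; rw [← fourierBasis_repr]; exact hf n hn
  · intro hf n hn; rw [fourierBasis_repr]; exact hf n hn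

lemma inner_fourierBasis_left (g : L2) (k : ℤ) :
    ⟪(fourierBasis k : L2), g⟫_ℂ = fourierCoeff (⇑g) k := by
  rw [← fourierBasis_repr, fourierBasis.repr_apply_apply]

lemma inner_fourierBasis_right (g : L2) (k : ℤ) :
    ⟪g, (fourierBasis k : L2)⟫_ℂ = (starRingEnd ℂ) (fourierCoeff (⇑g) k) := by
  rw [← inner_fourierBasis_left, ← inner_conj_symm]

lemma inner_eq_tsum (f g : L2) :
    ⟪f, g⟫_ℂ = ∑' k : ℤ, (starRingEnd ℂ) (fourierCoeff (⇑f) k) * fourierCoeff (⇑g) k := by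
  rw [← fourierBasis.tsum_inner_mul_inner f g]
  apply tsum_congr
  intro k
  rw [← inner_fourierBasis_left g k, ← inner_fourierBasis_right f k]

lemma mulCLM_mem_hardy {a : Linf} (ha : IsHardyInf a) {f : L2} (hf : f ∈ Hardy) :
    mulCLM a f ∈ Hardy := by
  rw [hardy_mem_iff]
  intro n hn
  have h0 : ⟪(fourierBasis n : L2), mulCLM a f⟫_ℂ = 0 := by
    rw [← inner_conj_symm, inner_mulCLM a f (fourierBasis n : L2), inner_eq_tsum]
    have : ∀ k : ℤ, (starRingEnd ℂ) (fourierCoeff (⇑f) k)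
        * fourierCoeff (⇑(mulCLM (star a) (fourierBasis n : L2))) k = 0 := by
      intro k
      rcases lt_or_ge k 0 with hk | hk
      · rw [hardy_mem_iff.mp hf k hk, map_zero, zero_mul]
      · rw [fourierCoeff_star_mul_fourier a n k, ha (n - k) (by omega), map_zero, mul_zero]
    rw [tsum_congr this, tsum_zero, map_zero]
  rw [← inner_fourierBasis_left]
  exact h0

lemma mulCLM_star_mem_hardy_orth {a : Linf} (ha : IsHardyInf a) {g : L2} (hg : g ∈ Hardyᗮ) :
    mulCLM (star a) g ∈ Hardyᗮ := by
  rw [Submodule.mem_orthogonal] at hg ⊢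
  intro h hh
  rw [← inner_mulCLM]
  exact hg _ (mulCLM_mem_hardy ha hh)

lemma mem_smulSub_iff {a : Linf} {K : Submodule ℂ L2} {f : L2} :
    f ∈ smulSub a K ↔ ∃ g ∈ K, mulCLM a g = f := by
  simp [smulSub, Submodule.mem_map]

lemma mem_smul_hardy_orth_iff (θ : Linf) (f : L2) :
    f ∈ (smulSub θ Hardy)ᗮ ↔ mulCLM (star θ) f ∈ Hardyᗮ := by
  rw [Submodule.mem_orthogonal, Submodule.mem_orthogonal]
  constructor
  · intro hf h hh
    rw [← inner_mulCLM]
    exact hf _ (mem_smulSub_iff.mpr ⟨h, hh, rfl⟩)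
  · intro hf u hu
    obtain ⟨h, hh, rfl⟩ := mem_smulSub_iff.mp hu
    rw [inner_mulCLM]
    exact hf h hh

lemma orth_smulSub {a b : Linf} (hab : ∀ᵐ x ∂μH, a x * b x = 1)
    (_hba : ∀ᵐ x ∂μH, b x * a x = 1) (K : Submodule ℂ L2) :
    (smulSub b K)ᗮ = smulSub (star a) Kᗮ := by
  ext u
  rw [Submodule.mem_orthogonal, mem_smulSub_iff]
  constructor
  · intro hu
    refine ⟨mulCLM (star b) u, ?_, mulCLM_star_cancel' hab u⟩
    rw [Submodule.mem_orthogonal]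
    intro g hg
    rw [← inner_mulCLM]
    exact hu _ (mem_smulSub_iff.mpr ⟨g, hg, rfl⟩)
  · rintro ⟨v, hv, rfl⟩
    intro w hw
    obtain ⟨g, hg, rfl⟩ := mem_smulSub_iff.mp hw
    rw [← inner_mulCLM, mulCLM_cancel' hab g]
    exact (Submodule.mem_orthogonal K v).mp hv g hg

lemma mem_subKer_iff (φ : Linf) (f : L2) :
    f ∈ subKer (genToeplitz φ Hardy Hardy) ↔ f ∈ Hardy ∧ mulCLM φ f ∈ Hardyᗮ := by
  rw [subKer, Submodule.mem_map]
  constructor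
  · rintro ⟨⟨g, hg⟩, hker, rfl⟩
    refine ⟨hg, ?_⟩
    have h0 : genToeplitz φ Hardy Hardy ⟨g, hg⟩ = 0 := hker
    have h1 : Hardy.orthogonalProjectionOnto (mulCLM φ g) = 0 := h0
    exact Submodule.orthogonalProjectionOnto_eq_zero_iff.mp h1
  · rintro ⟨hf, horth⟩
    refine ⟨⟨f, hf⟩, ?_, rfl⟩
    show genToeplitz φ Hardy Hardy ⟨f, hf⟩ = 0
    show Hardy.orthogonalProjectionOnto (mulCLM φ f) = 0
    exact Submodule.orthogonalProjectionOnto_eq_zero_iff.mpr horth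

end AuxLemmas

/-- Proposition 5.3: if `φ = a₋ θ̄ a₊` with `a₊ ∈ 𝒢H∞`
(inverse `b₊`) and `a₋ ∈ 𝒢H̄∞`, then `ker T_φ = a₊⁻¹ K_θ` and
`(ker T_φ)^⊥ = ā₊ K_θ^⊥` in `L²`. -/
theorem statement17 (θ : Linf) (hθ : IsInner θ)
    (aP bP : Linf) (haP : GHinfPair aP bP)
    (aM : Linf) (haM : IsGHinfBar aM)
    (φ : Linf) (hφ : φ = aM * star θ * aP) :
    subKer (genToeplitz φ Hardy Hardy) = smulSub bP (modelSpace θ) ∧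
    (subKer (genToeplitz φ Hardy Hardy))ᗮ = smulSub (star aP) (modelSpace θ)ᗮ := by
  obtain ⟨haP1, hbP1, habP⟩ := haP
  obtain ⟨c, ⟨d, hc1, hd1, hcd⟩, rfl⟩ := haM
  have habP' := ae_mul_one habP
  have hbaP := ae_mul_one' habP
  have hdc := ae_mul_one' hcd
  have key : ∀ f : L2, mulCLM φ f = mulCLM (star c) (mulCLM (star θ) (mulCLM aP f)) := by
    intro f
    rw [hφ, mulCLM_mul, mulCLM_mul]
  have hker : subKer (genToeplitz φ Hardy Hardy) = smulSub bP (modelSpace θ) := by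
    ext f
    rw [mem_subKer_iff, mem_smulSub_iff]
    constructor
    · rintro ⟨hfH, hfK⟩
      refine ⟨mulCLM aP f, ?_, mulCLM_cancel' hbaP f⟩
      refine Submodule.mem_inf.mpr ⟨mulCLM_mem_hardy haP1 hfH, ?_⟩
      rw [mem_smul_hardy_orth_iff]
      rw [key f] at hfK
      have h1 := mulCLM_star_mem_hardy_orth hd1 hfK
      rwa [mulCLM_star_cancel' hdc] at h1
    · rintro ⟨g, hg, rfl⟩
      obtain ⟨hgH, hgO⟩ := Submodule.mem_inf.mp hg
      refine ⟨mulCLM_mem_hardy hbP1 hgH, ?_⟩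
      rw [key, mulCLM_cancel' habP']
      exact mulCLM_star_mem_hardy_orth hc1 ((mem_smul_hardy_orth_iff θ g).mp hgO)
  refine ⟨hker, ?_⟩
  rw [hker]
  exact orth_smulSub habP' hbaP (modelSpace θ)
end
end
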